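/- Let g ≥ 2 and let p ≠ q be positive integers, and let a, b be integers with qa < pb (equivalently, τ < 0). Define, as rational numbers: τ = 2(qa − pb)/(p + q), μ₁ = (a + p(2g−2))/p, μ₂ = b/q, α_m = μ₁ − μ₂, and α_M = (1 + (p+q)/|p−q|)·(μ₁ − μ₂). Then |τ| ≤ min{p,q}·(2g−2) holds if and only if 0 < α_m ≤ 2g−2 ≤ α_M. -/
import Mathlib


set_option maxHeartbeats 1600000 in
/-- Let `g ≥ 2`, `p ≠ q` positive integers, `a, b` integers with `qa < pb` (i.e. `τ < 0`).
With `τ = 2(qa − pb)/(p + q)`, `μ₁ = (a + p(2g−2))/p`, `μ₂ = b/q`, `α_m = μ₁ − μ₂` and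
`α_M = (1 + (p+q)/|p−q|)(μ₁ − μ₂)` (as rational numbers), we have
`|τ| ≤ min{p,q}(2g−2)` if and only if `0 < α_m ≤ 2g−2 ≤ α_M`. -/
theorem toledo_range_iff_alpha_range (g p q : ℕ) (a b : ℤ)
    (hg : 2 ≤ g) (hp : 0 < p) (hq : 0 < q) (hpq : p ≠ q)
    (htau : (q : ℤ) * a < (p : ℤ) * b) :
    (|2 * ((q : ℚ) * a - (p : ℚ) * b) / ((p : ℚ) + q)| ≤ (min p q : ℚ) * (2 * g - 2)) ↔
      (0 < ((a : ℚ) + p * (2 * g - 2)) / p - (b : ℚ) / q ∧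
        ((a : ℚ) + p * (2 * g - 2)) / p - (b : ℚ) / q ≤ 2 * g - 2 ∧
        2 * (g : ℚ) - 2 ≤
          (1 + ((p : ℚ) + q) / |(p : ℚ) - q|) *
            (((a : ℚ) + p * (2 * g - 2)) / p - (b : ℚ) / q)) := by
  have hP : (0:ℚ) < p := by exact_mod_cast hp
  have hQ : (0:ℚ) < q := by exact_mod_cast hq
  have hD : (q:ℚ) * a - (p:ℚ) * b < 0 := by
    have : (q:ℚ) * a < (p:ℚ) * b := by exact_mod_cast htau
    linarith
  have hK : (2:ℚ) ≤ 2 * (g:ℚ) - 2 := by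
    have : (2:ℚ) ≤ (g:ℚ) := by exact_mod_cast hg
    linarith
  set K : ℚ := 2 * (g:ℚ) - 2 with hKdef
  have hK0 : 0 < K := by linarith
  set A : ℚ := ((a : ℚ) + p * K) / p - (b : ℚ) / q with hAdef
  have hA : A = ((q:ℚ) * a - (p:ℚ) * b + (p:ℚ) * q * K) / ((p:ℚ) * q) := by
    rw [hAdef]
    field_simp
    ring
  clear_value K A
  have h1 : |2 * ((q : ℚ) * a - (p : ℚ) * b) / ((p : ℚ) + q)|
      = (2 * ((p:ℚ) * b - (q:ℚ) * a)) / ((p:ℚ) + q) := by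
    rw [abs_of_neg (div_neg_of_neg_of_pos (by linarith) (by linarith))]
    ring
  rw [h1]
  rcases lt_or_gt_of_ne hpq with h | h
  · -- p < q
    have hPQ : (p:ℚ) < (q:ℚ) := by exact_mod_cast h
    have hmin : min (p:ℚ) (q:ℚ) = (p:ℚ) := min_eq_left hPQ.le
    have habs : |(p:ℚ) - q| = (q:ℚ) - p := by
      rw [abs_of_neg (by linarith), neg_sub]
    rw [hmin, habs, div_le_iff₀ (by linarith : (0:ℚ) < (p:ℚ) + q)]
    have hne : ((q:ℚ) - p) ≠ 0 := by linarith
    have h2q : 1 + ((p:ℚ) + q) / ((q:ℚ) - p) = 2 * q / ((q:ℚ) - p) := by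
      field_simp
      ring
    have hc : (1 + ((p:ℚ) + q) / ((q:ℚ) - p)) * A
        = (2 * q * ((q:ℚ) * a - (p:ℚ) * b + (p:ℚ) * q * K)) / (((q:ℚ) - p) * ((p:ℚ) * q)) := by
      rw [hA, h2q, div_mul_div_comm]
    constructor
    · intro hle
      have hx : 0 < (q:ℚ) * a - (p:ℚ) * b + (p:ℚ) * q * K := by nlinarith
      refine ⟨?_, ?_, ?_⟩
      · rw [hA]
        exact div_pos hx (by positivity)
      · rw [hA, div_le_iff₀ (by positivity : (0:ℚ) < (p:ℚ) * q)]
        nlinarith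
      · rw [hc, le_div_iff₀ (mul_pos (by linarith) (by positivity) : (0:ℚ) < ((q:ℚ) - p) * ((p:ℚ) * q))]
        nlinarith
    · rintro ⟨ha1, _, ha3⟩
      rw [hc, le_div_iff₀ (mul_pos (by linarith) (by positivity) : (0:ℚ) < ((q:ℚ) - p) * ((p:ℚ) * q))] at ha3
      nlinarith [ha3, hQ, hP, hK0, mul_pos hP hQ]
  · -- q < p
    have hPQ : (q:ℚ) < (p:ℚ) := by exact_mod_cast h
    have hmin : min (p:ℚ) (q:ℚ) = (q:ℚ) := min_eq_right hPQ.le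
    have habs : |(p:ℚ) - q| = (p:ℚ) - q := abs_of_pos (by linarith)
    rw [hmin, habs, div_le_iff₀ (by linarith : (0:ℚ) < (p:ℚ) + q)]
    have hne : ((p:ℚ) - q) ≠ 0 := by linarith
    have h2q : 1 + ((p:ℚ) + q) / ((p:ℚ) - q) = 2 * p / ((p:ℚ) - q) := by
      field_simp
      ring
    have hc : (1 + ((p:ℚ) + q) / ((p:ℚ) - q)) * A
        = (2 * p * ((q:ℚ) * a - (p:ℚ) * b + (p:ℚ) * q * K)) / (((p:ℚ) - q) * ((p:ℚ) * q)) := by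
      rw [hA, h2q, div_mul_div_comm]
    constructor
    · intro hle
      have hx : 0 < (q:ℚ) * a - (p:ℚ) * b + (p:ℚ) * q * K := by nlinarith
      refine ⟨?_, ?_, ?_⟩
      · rw [hA]
        exact div_pos hx (by positivity)
      · rw [hA, div_le_iff₀ (by positivity : (0:ℚ) < (p:ℚ) * q)]
        nlinarith
      · rw [hc, le_div_iff₀ (mul_pos (by linarith) (by positivity) : (0:ℚ) < ((p:ℚ) - q) * ((p:ℚ) * q))]
        nlinarith
    · rintro ⟨ha1, _, ha3⟩
      rw [hc, le_div_iff₀ (mul_pos (by linarith) (by positivity) : (0:ℚ) < ((p:ℚ) - q) * ((p:ℚ) * q))] at ha3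
      nlinarith [ha3, hQ, hP, hK0, mul_pos hP hQ]
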